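/- Convexity of the log weighted-sum in reparameterization parameters: for fixed w > 0 and strictly positive f : Fin d × Fin d → ℝ, the map θ ↦ log ∑_y (∑_x (e^{θ(x)} f(x,y))^{1/w})^{w} is a convex function of θ ∈ ℝ^d. -/

import Mathlib

open Finset Real

/-- Two-weight Hölder: `∑ uᵃ vᵇ ≤ (∑ u)ᵃ (∑ v)ᵇ` for `a + b = 1`, `a, b > 0`. -/
lemma holder_ab {ι : Type*} (s : Finset ι) (u v : ι → ℝ)
    (hu : ∀ i ∈ s, 0 ≤ u i) (hv : ∀ i ∈ s, 0 ≤ v i)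
    {a b : ℝ} (ha : 0 < a) (hb : 0 < b) (hab : a + b = 1) :
    ∑ i ∈ s, u i ^ a * v i ^ b ≤ (∑ i ∈ s, u i) ^ a * (∑ i ∈ s, v i) ^ b := by
  have hpq : Real.HolderConjugate (1 / a) (1 / b) := by
    rw [Real.holderConjugate_iff]
    constructor
    · rw [lt_div_iff₀ ha]; linarith
    · rw [one_div, one_div, inv_inv, inv_inv]; exact hab
  have key := Real.inner_le_Lp_mul_Lq_of_nonneg (s := s) hpq
      (f := fun i => u i ^ a) (g := fun i => v i ^ b)
      (fun i hi => Real.rpow_nonneg (hu i hi) a)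
      (fun i hi => Real.rpow_nonneg (hv i hi) b)
  have h1 : ∀ i ∈ s, (u i ^ a) ^ (1 / a) = u i := fun i hi => by
    rw [← Real.rpow_mul (hu i hi), mul_one_div_cancel ha.ne', Real.rpow_one]
  have h2 : ∀ i ∈ s, (v i ^ b) ^ (1 / b) = v i := fun i hi => by
    rw [← Real.rpow_mul (hv i hi), mul_one_div_cancel hb.ne', Real.rpow_one]
  calc ∑ i ∈ s, u i ^ a * v i ^ b
      ≤ (∑ i ∈ s, (u i ^ a) ^ (1 / a)) ^ (1 / (1 / a)) *
        (∑ i ∈ s, (v i ^ b) ^ (1 / b)) ^ (1 / (1 / b)) := key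
    _ = (∑ i ∈ s, u i) ^ a * (∑ i ∈ s, v i) ^ b := by
        rw [Finset.sum_congr rfl h1, Finset.sum_congr rfl h2, one_div_one_div, one_div_one_div]

/-- Convexity of the log weighted-sum in reparameterization parameters: for
`w > 0` and strictly positive `f`, the map
`θ ↦ log ∑ y (∑ x (e^{θ x} f(x,y))^{1/w})^w` is convex on `ℝ^d`. -/
theorem log_wsum_convex (d : ℕ) (f : Fin d × Fin d → ℝ)
    (hf : ∀ p, 0 < f p) (w : ℝ) (hw : 0 < w) :
    ConvexOn ℝ Set.univ
      (fun θ : Fin d → ℝ =>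
        Real.log (∑ y : Fin d,
          (∑ x : Fin d, (Real.exp (θ x) * f (x, y)) ^ (1 / w)) ^ w)) := by
  rcases Nat.eq_zero_or_pos d with hd | hd
  · subst hd
    simpa using convexOn_const (0 : ℝ) (convex_univ (𝕜 := ℝ) (E := Fin 0 → ℝ))
  -- d > 0 case
  set S : (Fin d → ℝ) → ℝ := fun θ =>
    ∑ y : Fin d, (∑ x : Fin d, (Real.exp (θ x) * f (x, y)) ^ (1 / w)) ^ w with hS
  have hinner_pos : ∀ (θ : Fin d → ℝ) (y : Fin d), 0 < ∑ x : Fin d, (Real.exp (θ x) * f (x, y)) ^ (1 / w) := by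
    intro θ y
    apply Finset.sum_pos
    · intro x _
      exact Real.rpow_pos_of_pos (mul_pos (Real.exp_pos _) (hf _)) _
    · exact Finset.univ_nonempty_iff.2 ⟨⟨0, hd⟩⟩
  have hSpos : ∀ (θ : Fin d → ℝ), 0 < S θ := by
    intro θ
    apply Finset.sum_pos
    · intro y _
      exact Real.rpow_pos_of_pos (hinner_pos θ y) _
    · exact Finset.univ_nonempty_iff.2 ⟨⟨0, hd⟩⟩
  refine ⟨convex_univ, ?_⟩
  intro θ₁ _ θ₂ _ a b ha hb hab
  rcases ha.eq_or_lt with rfl | ha'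
  · simp only [zero_smul, zero_add, zero_mul] at *
    simp [show b = 1 by linarith]
  rcases hb.eq_or_lt with rfl | hb'
  · simp only [zero_smul, add_zero] at *
    simp [show a = 1 by linarith]
  -- strict case
  have key : S (a • θ₁ + b • θ₂) ≤ S θ₁ ^ a * S θ₂ ^ b := by
    have step1 : ∀ y, (∑ x : Fin d, (Real.exp ((a • θ₁ + b • θ₂) x) * f (x, y)) ^ (1 / w)) ^ w
        ≤ ((∑ x : Fin d, (Real.exp (θ₁ x) * f (x, y)) ^ (1 / w)) ^ w) ^ a *
          ((∑ x : Fin d, (Real.exp (θ₂ x) * f (x, y)) ^ (1 / w)) ^ w) ^ b := by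
      intro y
      have hpt : ∀ x : Fin d, (Real.exp ((a • θ₁ + b • θ₂) x) * f (x, y)) ^ (1 / w) =
          ((Real.exp (θ₁ x) * f (x, y)) ^ (1 / w)) ^ a *
          ((Real.exp (θ₂ x) * f (x, y)) ^ (1 / w)) ^ b := by
        intro x
        have hP : (0 : ℝ) < Real.exp (θ₁ x) * f (x, y) := mul_pos (Real.exp_pos _) (hf _)
        have hQ : (0 : ℝ) < Real.exp (θ₂ x) * f (x, y) := mul_pos (Real.exp_pos _) (hf _)
        have e1 : Real.exp ((a • θ₁ + b • θ₂) x) * f (x, y) =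
            (Real.exp (θ₁ x) * f (x, y)) ^ a * (Real.exp (θ₂ x) * f (x, y)) ^ b := by
          rw [Real.mul_rpow (Real.exp_pos _).le (hf _).le,
              Real.mul_rpow (Real.exp_pos _).le (hf _).le,
              ← Real.exp_mul, ← Real.exp_mul]
          have hfab : f (x, y) ^ a * f (x, y) ^ b = f (x, y) := by
            rw [← Real.rpow_add (hf _), hab, Real.rpow_one]
          calc Real.exp ((a • θ₁ + b • θ₂) x) * f (x, y)
              = (Real.exp (θ₁ x * a) * Real.exp (θ₂ x * b)) * f (x, y) := by
                rw [← Real.exp_add]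
                congr 1
                simp [mul_comm]
            _ = Real.exp (θ₁ x * a) * f (x, y) ^ a * (Real.exp (θ₂ x * b) * f (x, y) ^ b) := by
                linear_combination
                  (-(Real.exp (θ₁ x * a) * Real.exp (θ₂ x * b))) * hfab
        rw [e1, Real.mul_rpow (Real.rpow_nonneg hP.le _) (Real.rpow_nonneg hQ.le _),
            ← Real.rpow_mul hP.le, ← Real.rpow_mul hQ.le,
            mul_comm a (1 / w), mul_comm b (1 / w),
            Real.rpow_mul hP.le, Real.rpow_mul hQ.le]
      have hsum : (∑ x : Fin d, (Real.exp ((a • θ₁ + b • θ₂) x) * f (x, y)) ^ (1 / w))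
          ≤ (∑ x : Fin d, (Real.exp (θ₁ x) * f (x, y)) ^ (1 / w)) ^ a *
            (∑ x : Fin d, (Real.exp (θ₂ x) * f (x, y)) ^ (1 / w)) ^ b := by
        rw [Finset.sum_congr rfl fun x _ => hpt x]
        exact holder_ab _ _ _
          (fun x _ => (Real.rpow_pos_of_pos (mul_pos (Real.exp_pos _) (hf _)) _).le)
          (fun x _ => (Real.rpow_pos_of_pos (mul_pos (Real.exp_pos _) (hf _)) _).le)
          ha' hb' hab
      have hA := hinner_pos θ₁ y
      have hB := hinner_pos θ₂ y
      calc (∑ x : Fin d, (Real.exp ((a • θ₁ + b • θ₂) x) * f (x, y)) ^ (1 / w)) ^ w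
          ≤ ((∑ x : Fin d, (Real.exp (θ₁ x) * f (x, y)) ^ (1 / w)) ^ a *
             (∑ x : Fin d, (Real.exp (θ₂ x) * f (x, y)) ^ (1 / w)) ^ b) ^ w :=
            Real.rpow_le_rpow (Finset.sum_nonneg fun x _ =>
              (Real.rpow_pos_of_pos (mul_pos (Real.exp_pos _) (hf _)) _).le) hsum hw.le
        _ = ((∑ x : Fin d, (Real.exp (θ₁ x) * f (x, y)) ^ (1 / w)) ^ w) ^ a *
            ((∑ x : Fin d, (Real.exp (θ₂ x) * f (x, y)) ^ (1 / w)) ^ w) ^ b := by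
            rw [Real.mul_rpow (Real.rpow_nonneg hA.le _) (Real.rpow_nonneg hB.le _),
                ← Real.rpow_mul hA.le, ← Real.rpow_mul hB.le,
                mul_comm a w, mul_comm b w, Real.rpow_mul hA.le, Real.rpow_mul hB.le]
    calc S (a • θ₁ + b • θ₂)
        ≤ ∑ y : Fin d,
            ((∑ x : Fin d, (Real.exp (θ₁ x) * f (x, y)) ^ (1 / w)) ^ w) ^ a *
            ((∑ x : Fin d, (Real.exp (θ₂ x) * f (x, y)) ^ (1 / w)) ^ w) ^ b :=
          Finset.sum_le_sum fun y _ => step1 y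
      _ ≤ S θ₁ ^ a * S θ₂ ^ b :=
          holder_ab _ _ _
            (fun y _ => (Real.rpow_pos_of_pos (hinner_pos θ₁ y) _).le)
            (fun y _ => (Real.rpow_pos_of_pos (hinner_pos θ₂ y) _).le)
            ha' hb' hab
  calc Real.log (S (a • θ₁ + b • θ₂)) ≤ Real.log (S θ₁ ^ a * S θ₂ ^ b) :=
        Real.log_le_log (hSpos _) key
    _ = a * Real.log (S θ₁) + b * Real.log (S θ₂) := by
        rw [Real.log_mul (Real.rpow_pos_of_pos (hSpos θ₁) _).ne'
            (Real.rpow_pos_of_pos (hSpos θ₂) _).ne',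
            Real.log_rpow (hSpos θ₁), Real.log_rpow (hSpos θ₂)]
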